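/- Let G be a compact group acting continuously by affine maps on a non-empty closed convex subset C of a quasi-complete locally convex space X. Then the action has a fixed point in C. -/

import Mathlib

open MeasureTheory Set

/-- Barycenter of a continuous map from a compact probability space into a topological
vector space, assuming the closed convex hull of the range is compact. -/
theorem barycenter_exists {G Y : Type*} [TopologicalSpace G] [CompactSpace G] [Nonempty G]
    [MeasurableSpace G] [OpensMeasurableSpace G]
    (μ : Measure G) [IsProbabilityMeasure μ]
    [AddCommGroup Y] [Module ℝ Y] [TopologicalSpace Y] [IsTopologicalAddGroup Y]
    [ContinuousSMul ℝ Y]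
    (u : G → Y) (hu : Continuous u)
    (hK : IsCompact (closure (convexHull ℝ (Set.range u)))) :
    ∃ x ∈ closure (convexHull ℝ (Set.range u)),
      ∀ f : Y →L[ℝ] ℝ, f x = ∫ t, f (u t) ∂μ := by
  classical
  set K := closure (convexHull ℝ (Set.range u)) with hKdef
  have hKconv : Convex ℝ K := (convex_convexHull ℝ _).closure
  have huK : ∀ t, u t ∈ K := fun t =>
    subset_closure (subset_convexHull ℝ _ ⟨t, rfl⟩)
  have hint : ∀ f : Y →L[ℝ] ℝ, Integrable (fun t => f (u t)) μ := by
    intro f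
    refine ((f.continuous.comp hu)).integrable_of_hasCompactSupport ?_
    exact IsCompact.of_isClosed_subset isCompact_univ (isClosed_tsupport _) (subset_univ _)
  have key : ∀ (F : Finset (Y →L[ℝ] ℝ)),
      (K ∩ ⋂ f ∈ F, {x | (f : Y →L[ℝ] ℝ) x = ∫ t, f (u t) ∂μ}).Nonempty := by
    intro F
    let T : Y →ₗ[ℝ] (F → ℝ) := LinearMap.pi fun f => ((f : Y →L[ℝ] ℝ) : Y →ₗ[ℝ] ℝ)
    have hT : Continuous T := continuous_pi fun f => (f : Y →L[ℝ] ℝ).continuous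
    let H : G → (F → ℝ) := fun t => T (u t)
    have hH : Continuous H := hT.comp hu
    have hHint : Integrable H μ :=
      hH.integrable_of_hasCompactSupport
        (IsCompact.of_isClosed_subset isCompact_univ (isClosed_tsupport _) (subset_univ _))
    set v : F → ℝ := ∫ t, H t ∂μ with hvdef
    have hv : v ∈ T '' K := by
      by_contra hvn
      have hD'c : IsCompact (T '' K) := hK.image hT
      obtain ⟨g, s, hgs, hsv⟩ :=
        geometric_hahn_banach_closed_point (hKconv.linear_image T) hD'c.isClosed hvn
      have h1 : g v = ∫ t, g (H t) ∂μ := by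
        rw [hvdef, ContinuousLinearMap.integral_comp_comm g hHint]
      have h2 : ∫ t, g (H t) ∂μ ≤ s := by
        have hgint : Integrable (fun t => g (H t)) μ :=
          ((g.continuous.comp hH)).integrable_of_hasCompactSupport
            (IsCompact.of_isClosed_subset isCompact_univ (isClosed_tsupport _) (subset_univ _))
        calc ∫ t, g (H t) ∂μ ≤ ∫ _t, s ∂μ :=
              integral_mono hgint (integrable_const s)
                (fun t => (hgs (H t) ⟨u t, huK t, rfl⟩).le)
          _ = s := by simp
      rw [h1] at hsv; linarith
    obtain ⟨x, hxK, hTx⟩ := hv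
    refine ⟨x, hxK, ?_⟩
    simp only [Set.mem_iInter, Set.mem_setOf_eq]
    intro f hf
    have h3 : T x ⟨f, hf⟩ = v ⟨f, hf⟩ := by rw [hTx]
    have h4 : v ⟨f, hf⟩ = ∫ t, H t ⟨f, hf⟩ ∂μ :=
      (ContinuousLinearMap.integral_comp_comm
        (ContinuousLinearMap.proj (R := ℝ) (φ := fun _ : F => ℝ) ⟨f, hf⟩) hHint).symm
    simpa [T, H, LinearMap.pi_apply] using h3.trans h4
  have hclosed : ∀ f : Y →L[ℝ] ℝ, IsClosed {x | (f : Y →L[ℝ] ℝ) x = ∫ t, f (u t) ∂μ} :=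
    fun f => isClosed_eq f.continuous continuous_const
  obtain ⟨x, hx⟩ := hK.inter_iInter_nonempty _ hclosed (fun F => by
    simpa using key F)
  obtain ⟨hxK, hx2⟩ := hx
  exact ⟨x, hxK, fun f => by simpa using Set.mem_iInter.mp hx2 f⟩

open Filter Topology

/-- A compact group acting continuously by affine maps on a non-empty closed
convex subset `C` of a quasi-complete locally convex space has a fixed point in `C`. -/
theorem stmt15 {G X : Type*} [Group G] [TopologicalSpace G] [IsTopologicalGroup G]
    [CompactSpace G]
    [AddCommGroup X] [Module ℝ X] [UniformSpace X] [IsUniformAddGroup X]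
    [ContinuousSMul ℝ X] [LocallyConvexSpace ℝ X] [T2Space X]
    (hqc : ∀ s : Set X, IsClosed s → Bornology.IsVonNBounded ℝ s → IsComplete s)
    (C : Set X) (hne : C.Nonempty) (hCcl : IsClosed C) (hCconv : Convex ℝ C)
    (γ : G → X → X) (hmaps : ∀ t : G, Set.MapsTo (γ t) C C)
    (haff : ∀ t : G, ∀ x ∈ C, ∀ y ∈ C, ∀ a b : ℝ, 0 ≤ a → 0 ≤ b → a + b = 1 →
      γ t (a • x + b • y) = a • γ t x + b • γ t y)
    (hact : ∀ s t : G, ∀ x ∈ C, γ (s * t) x = γ s (γ t x))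
    (hone : ∀ x ∈ C, γ 1 x = x)
    (hcont1 : ∀ t : G, ContinuousOn (γ t) C)
    (hcont2 : ∀ x ∈ C, Continuous fun t => γ t x) :
    ∃ x ∈ C, ∀ t : G, γ t x = x := by
  classical
  borelize G
  obtain ⟨x₀, hx₀⟩ := hne
  have : Nonempty G := ⟨1⟩
  -- Haar probability measure on the compact group `G`
  let K₀ : TopologicalSpace.PositiveCompacts G :=
    ⟨⟨Set.univ, isCompact_univ⟩, by simp [interior_univ]⟩
  let μ : Measure G := Measure.haarMeasure K₀
  have hμprob : IsProbabilityMeasure μ := ⟨by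
    exact Measure.haarMeasure_self (K₀ := K₀)⟩
  -- the orbit map
  set u : G → X := fun t => γ t x₀ with hudef
  have hu : Continuous u := hcont2 x₀ hx₀
  have huC : ∀ t, u t ∈ C := fun t => hmaps t hx₀
  have hrangeC : Set.range u ⊆ C := by rintro _ ⟨t, rfl⟩; exact huC t
  -- the closed convex hull of the orbit is compact
  set K : Set X := closure (convexHull ℝ (Set.range u)) with hKdef
  have htb : TotallyBounded (convexHull ℝ (Set.range u)) :=
    totallyBounded_convexHull.2 (isCompact_range hu).totallyBounded
  have hKcomp : IsCompact K :=
    isCompact_iff_totallyBounded_isComplete.2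
      ⟨htb.closure, hqc K isClosed_closure (htb.closure.isVonNBounded ℝ)⟩
  have hKC : K ⊆ C :=
    closure_minimal (convexHull_min hrangeC hCconv) hCcl
  have huK : ∀ t, u t ∈ K := fun t =>
    subset_closure (subset_convexHull ℝ _ ⟨t, rfl⟩)
  have hKconv : Convex ℝ K := (convex_convexHull ℝ _).closure
  -- the barycenter of the orbit
  obtain ⟨x, hxK, hx⟩ := barycenter_exists μ u hu hKcomp
  refine ⟨x, hKC hxK, fun s => ?_⟩
  -- it suffices to separate with continuous linear functionals
  by_contra hne'
  obtain ⟨f, hf⟩ : ∃ f : X →L[ℝ] ℝ, f (γ s x) ≠ f x := by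
    obtain ⟨f, hf⟩ := geometric_hahn_banach_point_point hne'
    exact ⟨f, ne_of_lt hf⟩
  apply hf
  -- graph trick: consider the graph of `f ∘ γ s` over `K` in `X × ℝ`
  set u' : G → X × ℝ := fun t => (u t, f (γ s (u t))) with hu'def
  have hγsu : Continuous fun t => γ s (u t) :=
    (hcont1 s).comp_continuous hu huC
  have hu' : Continuous u' := hu.prodMk (f.continuous.comp hγsu)
  set Gr : Set (X × ℝ) := (fun x => (x, f (γ s x))) '' K with hGrdef
  have hGrcomp : IsCompact Gr := by
    refine hKcomp.image_of_continuousOn ?_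
    exact (continuousOn_id.prodMk
      ((f.continuous.comp_continuousOn ((hcont1 s).mono hKC))))
  have hGrconv : Convex ℝ Gr := by
    rintro _ ⟨p, hp, rfl⟩ _ ⟨q, hq, rfl⟩ a b ha hb hab
    refine ⟨a • p + b • q, hKconv hp hq ha hb hab, ?_⟩
    have := haff s p (hKC hp) q (hKC hq) a b ha hb hab
    simp [Prod.ext_iff, this, Prod.smul_def, smul_eq_mul]
  have hrange' : Set.range u' ⊆ Gr := by
    rintro _ ⟨t, rfl⟩; exact ⟨u t, huK t, rfl⟩
  have hsub : closure (convexHull ℝ (Set.range u')) ⊆ Gr :=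
    closure_minimal (convexHull_min hrange' hGrconv) hGrcomp.isClosed
  have hK'comp : IsCompact (closure (convexHull ℝ (Set.range u'))) :=
    hGrcomp.of_isClosed_subset isClosed_closure hsub
  obtain ⟨y, hyK', hy⟩ := barycenter_exists μ u' hu' hK'comp
  obtain ⟨z, hzK, hzy⟩ := hsub hyK'
  -- the first coordinate of `y` is `x`
  have hzx : z = x := by
    by_contra hzx
    obtain ⟨h, hh⟩ := geometric_hahn_banach_point_point hzx
    have h1 : h z = ∫ t, h (u t) ∂μ := by
      have h1' := hy (h.comp (ContinuousLinearMap.fst ℝ X ℝ))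
      rw [← hzy] at h1'
      exact h1'
    rw [h1, ← hx h] at hh
    exact lt_irrefl _ hh
  -- the second coordinate gives the invariance
  have h3 := hy (ContinuousLinearMap.snd ℝ X ℝ)
  rw [← hzy, hzx] at h3
  simp only [ContinuousLinearMap.coe_snd'] at h3
  have h5 : ∀ t, f (γ s (u t)) = f (u (s * t)) := by
    intro t
    rw [hudef]
    simp only
    rw [hact s t x₀ hx₀]
  have h6 : (∫ t, f (u (s * t)) ∂μ) = ∫ t, f (u t) ∂μ :=
    MeasureTheory.integral_mul_left_eq_self (fun t => f (u t)) s
  calc f (γ s x) = ∫ t, f (γ s (u t)) ∂μ := h3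
    _ = ∫ t, f (u (s * t)) ∂μ := by simp_rw [h5]
    _ = ∫ t, f (u t) ∂μ := h6
    _ = f x := (hx f).symm
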